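/- (Rademacher–Menshov inequality) For any 2 ≤ ρ < ∞, any j₀, m ∈ ℕ with j₀ < 2^m, and any sequence of complex numbers (a_k)_{k∈ℕ}, one has V^ρ(a_j : j₀ ≤ j ≤ 2^m) ≤ √2 · ∑_{i=0}^{m} ( ∑_{j ∈ [j₀ 2^{-i}, 2^{m-i} - 1] ∩ ℤ} |a_{(j+1)2^i} - a_{j 2^i}|² )^{1/2}. -/

import Mathlib

open scoped BigOperators ENNReal NNReal

/-- The `ρ`-variation of the finite family `a j`, `lo ≤ j ≤ hi`, of complex numbers:
the supremum over finite strictly increasing sequences in `[lo, hi] ∩ ℕ`. -/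
noncomputable def varRange (ρ : ℝ) (a : ℕ → ℂ) (lo hi : ℕ) : ℝ≥0∞ :=
  ⨆ (J : ℕ) (t : Fin (J + 1) → ℕ) (_ : StrictMono t) (_ : ∀ k, lo ≤ t k ∧ t k ≤ hi),
    (∑ j : Fin J, (‖a (t j.succ) - a (t j.castSucc)‖₊ : ℝ≥0∞) ^ ρ) ^ (1 / ρ)

namespace RM

/-- dyadic chain in units: at level `i`, the pair `(x, y)` represents positions
`x * 2^i` and `y * 2^i` (when not frozen). -/
def ch (s t : ℕ) : ℕ → ℕ × ℕ
  | 0 => (s, t)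
  | (i+1) => let c := ch s t i
             if c.1 = c.2 then c else ((c.1 + 1)/2, c.2/2)

lemma ch_succ (s t i : ℕ) : ch s t (i+1) =
    if (ch s t i).1 = (ch s t i).2 then ch s t i
    else (((ch s t i).1 + 1)/2, (ch s t i).2/2) := rfl

lemma ch_inv (s t : ℕ) (hst : s ≤ t) : ∀ i : ℕ,
    (ch s t i).1 ≤ (ch s t i).2 ∧
    ((ch s t i).1 = (ch s t i).2 ∨ (s ≤ (ch s t i).1 * 2^i ∧ (ch s t i).2 * 2^i ≤ t))
  | 0 => ⟨hst, Or.inr ⟨by simp [ch], by simp [ch]⟩⟩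
  | (i+1) => by
    obtain ⟨h1, h2⟩ := ch_inv s t hst i
    rw [ch_succ]
    by_cases h : (ch s t i).1 = (ch s t i).2
    · simp only [if_pos h]; exact ⟨h1, Or.inl h⟩
    · simp only [h, if_false]
      rcases h2 with h2 | ⟨h3, h4⟩
      · exact absurd h2 h
      refine ⟨by show ((ch s t i).1+1)/2 ≤ (ch s t i).2/2; omega, Or.inr ⟨?_, ?_⟩⟩
      · show s ≤ ((ch s t i).1+1)/2 * 2^(i+1)
        calc s ≤ (ch s t i).1 * 2^i := h3
          _ ≤ (((ch s t i).1 + 1)/2 * 2) * 2^i := by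
              have : (ch s t i).1 ≤ ((ch s t i).1 + 1)/2 * 2 := by omega
              exact Nat.mul_le_mul_right _ this
          _ = ((ch s t i).1 + 1)/2 * 2^(i+1) := by ring
      · show (ch s t i).2/2 * 2^(i+1) ≤ t
        calc (ch s t i).2/2 * 2^(i+1) = ((ch s t i).2/2 * 2) * 2^i := by ring
          _ ≤ (ch s t i).2 * 2^i := Nat.mul_le_mul_right _ (by omega)
          _ ≤ t := h4

lemma ch_final (s t m : ℕ) (hst : s ≤ t) (ht : t ≤ 2^m) :
    (ch s t (m+1)).1 = (ch s t (m+1)).2 := by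
  obtain ⟨h1, h2⟩ := ch_inv s t hst (m+1)
  rcases h2 with h | ⟨h3, h4⟩
  · exact h
  · have hy : (ch s t (m+1)).2 = 0 := by
      by_contra hy
      have h5 : 1 * 2^(m+1) ≤ (ch s t (m+1)).2 * 2^(m+1) :=
        Nat.mul_le_mul_right _ (Nat.one_le_iff_ne_zero.2 hy)
      have h6 : (2:ℕ)^m < 2^(m+1) := Nat.pow_lt_pow_succ (by norm_num)
      omega
    omega

variable (a : ℕ → ℂ)

/-- the "up-side" increment at scale `i`. -/
def Ui (s t i : ℕ) : ℂ :=
  if (ch s t i).1 = (ch s t i).2 then 0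
  else a ((ch s t (i+1)).1 * 2^(i+1)) - a ((ch s t i).1 * 2^i)

/-- the "down-side" increment at scale `i`. -/
def Vi (s t i : ℕ) : ℂ :=
  if (ch s t i).1 = (ch s t i).2 then 0
  else a ((ch s t i).2 * 2^i) - a ((ch s t (i+1)).2 * 2^(i+1))

lemma telescope_aux (s t : ℕ) : ∀ i : ℕ,
    (∑ l ∈ Finset.range i, (Ui a s t l + Vi a s t l)) +
      (a ((ch s t i).2 * 2^i) - a ((ch s t i).1 * 2^i)) = a t - a s
  | 0 => by simp [ch]
  | (i+1) => by
    have ih := telescope_aux s t i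
    rw [Finset.sum_range_succ]
    by_cases h : (ch s t i).1 = (ch s t i).2
    · have hc : ch s t (i+1) = ch s t i := by rw [ch_succ, if_pos h]
      rw [Ui, Vi, if_pos h, if_pos h, hc]
      rw [← ih]
      rw [h]
      ring
    · have hc : ch s t (i+1) = (((ch s t i).1 + 1)/2, (ch s t i).2/2) := by
        rw [ch_succ, if_neg h]
      rw [Ui, Vi, if_neg h, if_neg h]
      rw [← ih]
      ring

lemma telescope (s t m : ℕ) (hst : s ≤ t) (ht : t ≤ 2^m) :
    ∑ l ∈ Finset.range (m+1), (Ui a s t l + Vi a s t l) = a t - a s := by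
  have h := telescope_aux a s t (m+1)
  rw [ch_final s t m hst ht] at h
  simpa using h

lemma Ui_spec (s t i : ℕ) (hst : s ≤ t) (hne : Ui a s t i ≠ 0) :
    (ch s t i).1 % 2 = 1 ∧ s ≤ (ch s t i).1 * 2^i ∧ ((ch s t i).1 + 1) * 2^i ≤ t ∧
      Ui a s t i = a (((ch s t i).1 + 1) * 2^i) - a ((ch s t i).1 * 2^i) := by
  rw [Ui] at hne ⊢
  by_cases h : (ch s t i).1 = (ch s t i).2
  · exact absurd (if_pos h) hne
  obtain ⟨h1, h2⟩ := ch_inv s t hst i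
  rcases h2 with h2 | ⟨h3, h4⟩
  · exact absurd h2 h
  have hc : (ch s t (i+1)).1 = ((ch s t i).1 + 1)/2 := by rw [ch_succ, if_neg h]
  rw [if_neg h] at hne ⊢
  by_cases hpar : (ch s t i).1 % 2 = 0
  · exfalso
    apply hne
    have : (ch s t (i+1)).1 * 2^(i+1) = (ch s t i).1 * 2^i := by
      rw [hc]
      have h5 : ((ch s t i).1 + 1)/2 * 2 = (ch s t i).1 := by omega
      calc ((ch s t i).1 + 1)/2 * 2^(i+1) = (((ch s t i).1 + 1)/2 * 2) * 2^i := by ring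
        _ = (ch s t i).1 * 2^i := by rw [h5]
    rw [this, sub_self]
  · have hpar' : (ch s t i).1 % 2 = 1 := by omega
    have hpos : (ch s t (i+1)).1 * 2^(i+1) = ((ch s t i).1 + 1) * 2^i := by
      rw [hc]
      have h5 : ((ch s t i).1 + 1)/2 * 2 = (ch s t i).1 + 1 := by omega
      calc ((ch s t i).1 + 1)/2 * 2^(i+1) = (((ch s t i).1 + 1)/2 * 2) * 2^i := by ring
        _ = ((ch s t i).1 + 1) * 2^i := by rw [h5]
    refine ⟨hpar', h3, ?_, by rw [hpos]⟩
    calc ((ch s t i).1 + 1) * 2^i ≤ (ch s t i).2 * 2^i := Nat.mul_le_mul_right _ (by omega)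
      _ ≤ t := h4

lemma Vi_spec (s t i : ℕ) (hst : s ≤ t) (hne : Vi a s t i ≠ 0) :
    ((ch s t i).2 - 1) % 2 = 0 ∧ s ≤ ((ch s t i).2 - 1) * 2^i ∧
      (((ch s t i).2 - 1) + 1) * 2^i ≤ t ∧
      Vi a s t i = a ((((ch s t i).2 - 1) + 1) * 2^i) - a (((ch s t i).2 - 1) * 2^i) := by
  rw [Vi] at hne ⊢
  by_cases h : (ch s t i).1 = (ch s t i).2
  · exact absurd (if_pos h) hne
  obtain ⟨h1, h2⟩ := ch_inv s t hst i
  rcases h2 with h2 | ⟨h3, h4⟩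
  · exact absurd h2 h
  have hc : (ch s t (i+1)).2 = (ch s t i).2/2 := by rw [ch_succ, if_neg h]
  rw [if_neg h] at hne ⊢
  by_cases hpar : (ch s t i).2 % 2 = 0
  · exfalso
    apply hne
    have : (ch s t (i+1)).2 * 2^(i+1) = (ch s t i).2 * 2^i := by
      rw [hc]
      have h5 : (ch s t i).2/2 * 2 = (ch s t i).2 := by omega
      calc (ch s t i).2/2 * 2^(i+1) = ((ch s t i).2/2 * 2) * 2^i := by ring
        _ = (ch s t i).2 * 2^i := by rw [h5]
    rw [this, sub_self]
  · have hlt : (ch s t i).1 < (ch s t i).2 := lt_of_le_of_ne h1 h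
    have hdown : (ch s t (i+1)).2 * 2^(i+1) = ((ch s t i).2 - 1) * 2^i := by
      rw [hc]
      have h5 : (ch s t i).2/2 * 2 = (ch s t i).2 - 1 := by omega
      calc (ch s t i).2/2 * 2^(i+1) = ((ch s t i).2/2 * 2) * 2^i := by ring
        _ = ((ch s t i).2 - 1) * 2^i := by rw [h5]
    have hsucc : ((ch s t i).2 - 1) + 1 = (ch s t i).2 := by omega
    refine ⟨by omega, ?_, ?_, ?_⟩
    · calc s ≤ (ch s t i).1 * 2^i := h3
        _ ≤ ((ch s t i).2 - 1) * 2^i := Nat.mul_le_mul_right _ (by omega)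
    · rw [hsucc]; exact h4
    · rw [hdown, hsucc]

lemma rpow_two_eq (x : ℝ≥0∞) : x ^ (2:ℝ) = x ^ (2:ℕ) := by
  rw [← ENNReal.rpow_natCast]; norm_num

lemma lp_le_l2 {κ : Type*} [Fintype κ] (f : κ → ℝ≥0∞) {ρ : ℝ} (hρ : 2 ≤ ρ) :
    (∑ k, f k ^ ρ) ^ (1/ρ) ≤ (∑ k, f k ^ (2:ℝ)) ^ ((1:ℝ)/2) := by
  have hρ0 : (0:ℝ) < ρ := by linarith
  set S := (∑ k, f k ^ (2:ℝ)) ^ ((1:ℝ)/2) with hS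
  rcases eq_or_ne S ⊤ with h | hStop
  · rw [h]; exact le_top
  rcases eq_or_ne S 0 with h | hS0
  · have h2 : (∑ k, f k ^ (2:ℝ)) = 0 := by
      rcases (ENNReal.rpow_eq_zero_iff).1 h with ⟨h3, _⟩ | ⟨_, h4⟩
      · exact h3
      · norm_num at h4
    have hf : ∀ k, f k = 0 := by
      intro k
      have h5 := Finset.sum_eq_zero_iff.1 h2 k (Finset.mem_univ k)
      rcases (ENNReal.rpow_eq_zero_iff).1 h5 with ⟨h3, _⟩ | ⟨_, h4⟩
      · exact h3
      · norm_num at h4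
    have h6 : (∑ k, f k ^ ρ) = 0 :=
      Finset.sum_eq_zero fun k _ => by rw [hf k, ENNReal.zero_rpow_of_pos hρ0]
    rw [h6, h, ENNReal.zero_rpow_of_pos (by positivity)]
  · have hfS : ∀ k, f k ≤ S := by
      intro k
      have h1 : f k ^ (2:ℝ) ≤ ∑ k', f k' ^ (2:ℝ) :=
        Finset.single_le_sum (f := fun k' => f k' ^ (2:ℝ)) (fun _ _ => zero_le)
          (Finset.mem_univ k)
      have h2 := ENNReal.rpow_le_rpow h1 (by norm_num : (0:ℝ) ≤ 1/2)
      rwa [← ENNReal.rpow_mul, show (2:ℝ) * (1/2) = 1 by norm_num, ENNReal.rpow_one] at h2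
    have hsum : (∑ k, f k ^ ρ) ≤ S ^ ρ := by
      have hSsq : (∑ k, f k ^ (2:ℝ)) = S ^ (2:ℝ) := by
        rw [hS, ← ENNReal.rpow_mul]
        norm_num
      calc (∑ k, f k ^ ρ) ≤ ∑ k, f k ^ (2:ℝ) * S ^ (ρ - 2) := by
            refine Finset.sum_le_sum fun k _ => ?_
            rcases eq_or_ne (f k) 0 with h | h
            · rw [h, ENNReal.zero_rpow_of_pos hρ0]; exact zero_le
            · have hfk_top : f k ≠ ⊤ := ne_top_of_le_ne_top hStop (hfS k)
              have e : f k ^ ρ = f k ^ (2:ℝ) * f k ^ (ρ - 2) := by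
                rw [← ENNReal.rpow_add _ _ h hfk_top]; congr 1; ring
              rw [e]
              exact mul_le_mul_right (ENNReal.rpow_le_rpow (hfS k) (by linarith)) _
        _ = (∑ k, f k ^ (2:ℝ)) * S ^ (ρ - 2) := by rw [← Finset.sum_mul]
        _ = S ^ (2:ℝ) * S ^ (ρ - 2) := by rw [hSsq]
        _ = S ^ ρ := by rw [← ENNReal.rpow_add _ _ hS0 hStop]; norm_num
    calc (∑ k, f k ^ ρ) ^ (1/ρ) ≤ (S ^ ρ) ^ (1/ρ) := ENNReal.rpow_le_rpow hsum (by positivity)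
      _ = S := by
          rw [← ENNReal.rpow_mul, mul_one_div, div_self (ne_of_gt hρ0), ENNReal.rpow_one]

lemma minkowski_sum {ι κ : Type*} [Fintype κ] (s : Finset ι) (f : ι → κ → ℝ≥0∞) :
    (∑ k, (∑ i ∈ s, f i k) ^ (2:ℝ)) ^ ((1:ℝ)/2) ≤
      ∑ i ∈ s, (∑ k, (f i k) ^ (2:ℝ)) ^ ((1:ℝ)/2) := by
  classical
  induction s using Finset.induction with
  | empty =>
    simp only [Finset.sum_empty,
      show ((0:ℝ≥0∞) ^ (2:ℝ)) = 0 from ENNReal.zero_rpow_of_pos (by norm_num),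
      Finset.sum_const_zero]
    rw [ENNReal.zero_rpow_of_pos (by norm_num)]
  | @insert i s hi ih =>
    simp only [Finset.sum_insert hi]
    calc (∑ k, (f i k + ∑ i' ∈ s, f i' k) ^ (2:ℝ)) ^ ((1:ℝ)/2)
        ≤ (∑ k, (f i k) ^ (2:ℝ)) ^ ((1:ℝ)/2)
            + (∑ k, (∑ i' ∈ s, f i' k) ^ (2:ℝ)) ^ ((1:ℝ)/2) := by
          simpa using ENNReal.Lp_add_le (Finset.univ) (fun k => f i k)
            (fun k => ∑ i' ∈ s, f i' k) (by norm_num : (1:ℝ) ≤ 2)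
      _ ≤ _ := add_le_add le_rfl ih

lemma add_sq_le (u v : ℝ≥0) :
    ((u:ℝ≥0∞) + v) ^ (2:ℝ) ≤ 2 * ((u:ℝ≥0∞) ^ (2:ℝ) + (v:ℝ≥0∞) ^ (2:ℝ)) := by
  simp only [rpow_two_eq]
  rw [← ENNReal.coe_add, ← ENNReal.coe_pow, ← ENNReal.coe_pow, ← ENNReal.coe_pow,
    ← ENNReal.coe_add, show ((2:ℝ≥0∞)) = ((2:ℝ≥0):ℝ≥0∞) by norm_num, ← ENNReal.coe_mul,
    ENNReal.coe_le_coe, ← NNReal.coe_le_coe]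
  push_cast
  nlinarith [sq_nonneg ((u:ℝ) - (v:ℝ))]

lemma sum_sq_le_of_spec {J : ℕ} (g : Fin J → ℂ) (φ : Fin J → ℕ) (σ : Fin (J+1) → ℕ)
    (hσ : StrictMono σ) (i : ℕ) (F : Finset ℕ)
    (hspec : ∀ k, g k ≠ 0 → φ k ∈ F ∧ σ k.castSucc ≤ φ k * 2^i ∧
      (φ k + 1) * 2^i ≤ σ k.succ ∧ g k = a ((φ k + 1) * 2^i) - a (φ k * 2^i)) :
    ∑ k : Fin J, (‖g k‖₊ : ℝ≥0∞) ^ (2:ℝ) ≤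
      ∑ j ∈ F, (‖a ((j+1) * 2^i) - a (j * 2^i)‖₊ : ℝ≥0∞) ^ (2:ℝ) := by
  classical
  set T := Finset.univ.filter (fun k => g k ≠ 0) with hT
  have h2pos : (0:ℕ) < 2^i := Nat.pow_pos (by norm_num)
  have h1 : ∑ k ∈ T, (‖g k‖₊ : ℝ≥0∞) ^ (2:ℝ) = ∑ k : Fin J, (‖g k‖₊ : ℝ≥0∞) ^ (2:ℝ) := by
    refine Finset.sum_filter_of_ne fun k _ hk => ?_
    intro hg
    apply hk
    rw [hg]
    simp only [nnnorm_zero, ENNReal.coe_zero]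
    exact ENNReal.zero_rpow_of_pos (by norm_num)
  have hmem : ∀ k ∈ T, g k ≠ 0 := fun k hk => (Finset.mem_filter.1 hk).2
  have hinj : ∀ k ∈ T, ∀ k' ∈ T, φ k = φ k' → k = k' := by
    intro k hk k' hk' he
    by_contra hne
    obtain ⟨_, h2, h3, _⟩ := hspec k (hmem k hk)
    obtain ⟨_, h2', h3', _⟩ := hspec k' (hmem k' hk')
    have hstep : (φ k + 1) * 2^i = φ k * 2^i + 2^i := by ring
    have hstep' : (φ k' + 1) * 2^i = φ k' * 2^i + 2^i := by ring
    have heq : φ k * 2^i = φ k' * 2^i := by rw [he]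
    rcases lt_or_gt_of_ne (fun h : k = k' => hne h) with hlt | hlt
    · have hle : σ k.succ ≤ σ k'.castSucc := by
        apply hσ.monotone
        rw [Fin.le_def]
        simp only [Fin.val_succ, Fin.coe_castSucc]
        exact Fin.lt_def.1 hlt
      omega
    · have hle : σ k'.succ ≤ σ k.castSucc := by
        apply hσ.monotone
        rw [Fin.le_def]
        simp only [Fin.val_succ, Fin.coe_castSucc]
        exact Fin.lt_def.1 hlt
      omega
  calc ∑ k : Fin J, (‖g k‖₊ : ℝ≥0∞) ^ (2:ℝ)
      = ∑ k ∈ T, (‖g k‖₊ : ℝ≥0∞) ^ (2:ℝ) := h1.symm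
    _ = ∑ k ∈ T, (‖a ((φ k + 1) * 2^i) - a (φ k * 2^i)‖₊ : ℝ≥0∞) ^ (2:ℝ) := by
        refine Finset.sum_congr rfl fun k hk => ?_
        obtain ⟨_, _, _, h4⟩ := hspec k (hmem k hk)
        rw [h4]
    _ = ∑ j ∈ T.image φ, (‖a ((j+1) * 2^i) - a (j * 2^i)‖₊ : ℝ≥0∞) ^ (2:ℝ) :=
        (Finset.sum_image
          (f := fun j => (‖a ((j+1) * 2^i) - a (j * 2^i)‖₊ : ℝ≥0∞) ^ (2:ℝ)) hinj).symm
    _ ≤ ∑ j ∈ F, (‖a ((j+1) * 2^i) - a (j * 2^i)‖₊ : ℝ≥0∞) ^ (2:ℝ) := by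
        refine Finset.sum_le_sum_of_subset ?_
        intro j hj
        obtain ⟨k, hk, rfl⟩ := Finset.mem_image.1 hj
        exact (hspec k (hmem k hk)).1
lemma per_scale {J m : ℕ} (j₀ : ℕ) (σ : Fin (J+1) → ℕ) (hσ : StrictMono σ)
    (hb : ∀ k, j₀ ≤ σ k ∧ σ k ≤ 2^m) {i : ℕ} (hi : i ≤ m) :
    ∑ k : Fin J,
        ((‖Ui a (σ k.castSucc) (σ k.succ) i‖₊ : ℝ≥0∞)
          + (‖Vi a (σ k.castSucc) (σ k.succ) i‖₊ : ℝ≥0∞)) ^ (2:ℝ)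
      ≤ 2 * ∑ j ∈ (Finset.range (2^(m-i))).filter (fun j => j₀ ≤ j * 2^i),
          (‖a ((j+1) * 2^i) - a (j * 2^i)‖₊ : ℝ≥0∞) ^ (2:ℝ) := by
  classical
  set F := (Finset.range (2^(m-i))).filter (fun j => j₀ ≤ j * 2^i) with hF
  have h2pos : (0:ℕ) < 2^i := Nat.pow_pos (by norm_num)
  have hpow : (2:ℕ)^m = 2^(m-i) * 2^i := by rw [← pow_add]; congr 1; omega
  have hmemF : ∀ (j : ℕ), j₀ ≤ j * 2^i → (j+1) * 2^i ≤ 2^m → j ∈ F := by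
    intro j hj hj2
    rw [hF, Finset.mem_filter, Finset.mem_range]
    refine ⟨?_, hj⟩
    rw [hpow] at hj2
    have := Nat.le_of_mul_le_mul_right hj2 h2pos
    omega
  have hstU : ∀ k : Fin J, σ k.castSucc ≤ σ k.succ :=
    fun k => (hσ (Fin.castSucc_lt_succ : k.castSucc < k.succ)).le
  have hU : ∑ k : Fin J, (‖Ui a (σ k.castSucc) (σ k.succ) i‖₊ : ℝ≥0∞) ^ (2:ℝ)
      ≤ ∑ j ∈ F.filter (fun j => j % 2 = 1),
          (‖a ((j+1) * 2^i) - a (j * 2^i)‖₊ : ℝ≥0∞) ^ (2:ℝ) := by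
    refine sum_sq_le_of_spec a _ (fun k => (ch (σ k.castSucc) (σ k.succ) i).1) σ hσ i _ ?_
    intro k hne
    obtain ⟨hpar, hs, ht, heq⟩ := Ui_spec a _ _ i (hstU k) hne
    have hjF : (ch (σ k.castSucc) (σ k.succ) i).1 ∈ F :=
      hmemF _ (le_trans (hb k.castSucc).1 hs) (le_trans ht (hb k.succ).2)
    exact ⟨Finset.mem_filter.2 ⟨hjF, hpar⟩, hs, ht, heq⟩
  have hV : ∑ k : Fin J, (‖Vi a (σ k.castSucc) (σ k.succ) i‖₊ : ℝ≥0∞) ^ (2:ℝ)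
      ≤ ∑ j ∈ F.filter (fun j => ¬ j % 2 = 1),
          (‖a ((j+1) * 2^i) - a (j * 2^i)‖₊ : ℝ≥0∞) ^ (2:ℝ) := by
    refine sum_sq_le_of_spec a _ (fun k => (ch (σ k.castSucc) (σ k.succ) i).2 - 1) σ hσ i _ ?_
    intro k hne
    obtain ⟨hpar, hs, ht, heq⟩ := Vi_spec a _ _ i (hstU k) hne
    have hjF : (ch (σ k.castSucc) (σ k.succ) i).2 - 1 ∈ F :=
      hmemF _ (le_trans (hb k.castSucc).1 hs) (le_trans ht (hb k.succ).2)
    refine ⟨Finset.mem_filter.2 ⟨hjF, ?_⟩, hs, ht, heq⟩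
    show ¬ ((ch (σ k.castSucc) (σ k.succ) i).2 - 1) % 2 = 1
    omega
  calc ∑ k : Fin J,
        ((‖Ui a (σ k.castSucc) (σ k.succ) i‖₊ : ℝ≥0∞)
          + (‖Vi a (σ k.castSucc) (σ k.succ) i‖₊ : ℝ≥0∞)) ^ (2:ℝ)
      ≤ ∑ k : Fin J, 2 * ((‖Ui a (σ k.castSucc) (σ k.succ) i‖₊ : ℝ≥0∞) ^ (2:ℝ)
          + (‖Vi a (σ k.castSucc) (σ k.succ) i‖₊ : ℝ≥0∞) ^ (2:ℝ)) :=
        Finset.sum_le_sum fun k _ => add_sq_le _ _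
    _ = 2 * ((∑ k : Fin J, (‖Ui a (σ k.castSucc) (σ k.succ) i‖₊ : ℝ≥0∞) ^ (2:ℝ))
          + ∑ k : Fin J, (‖Vi a (σ k.castSucc) (σ k.succ) i‖₊ : ℝ≥0∞) ^ (2:ℝ)) := by
        rw [← Finset.mul_sum, Finset.sum_add_distrib]
    _ ≤ 2 * ((∑ j ∈ F.filter (fun j => j % 2 = 1),
            (‖a ((j+1) * 2^i) - a (j * 2^i)‖₊ : ℝ≥0∞) ^ (2:ℝ))
          + ∑ j ∈ F.filter (fun j => ¬ j % 2 = 1),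
            (‖a ((j+1) * 2^i) - a (j * 2^i)‖₊ : ℝ≥0∞) ^ (2:ℝ)) :=
        mul_le_mul_right (add_le_add hU hV) _
    _ = 2 * ∑ j ∈ F, (‖a ((j+1) * 2^i) - a (j * 2^i)‖₊ : ℝ≥0∞) ^ (2:ℝ) := by
        rw [Finset.sum_filter_add_sum_filter_not]

end RM

/-- The Rademacher–Menshov inequality: for `2 ≤ ρ < ∞`, `j₀ < 2^m` and any sequence of
complex numbers `(a k)`, one has
`V^ρ(a_j : j₀ ≤ j ≤ 2^m) ≤ √2 ∑_{i=0}^{m} (∑_{j₀ 2^{-i} ≤ j ≤ 2^{m-i}-1} |a_{(j+1)2^i} - a_{j2^i}|²)^{1/2}`. -/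
theorem stmt3 (ρ : ℝ) (hρ : 2 ≤ ρ) (j₀ m : ℕ) (hj₀ : j₀ < 2 ^ m) (a : ℕ → ℂ) :
    varRange ρ a j₀ (2 ^ m) ≤
      ENNReal.ofReal (Real.sqrt 2) *
        ∑ i ∈ Finset.range (m + 1),
          (∑ j ∈ (Finset.range (2 ^ (m - i))).filter (fun j => j₀ ≤ j * 2 ^ i),
              (‖a ((j + 1) * 2 ^ i) - a (j * 2 ^ i)‖₊ : ℝ≥0∞) ^ 2) ^ ((1 : ℝ) / 2) := by
  have sqrt2 : ENNReal.ofReal (Real.sqrt 2) = (2:ℝ≥0∞) ^ ((1:ℝ)/2) := by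
    rw [show (2:ℝ≥0∞) = ENNReal.ofReal 2 by norm_num,
      ENNReal.ofReal_rpow_of_pos (by norm_num : (0:ℝ) < 2), Real.sqrt_eq_rpow]
  simp only [varRange]
  refine iSup_le fun J => iSup_le fun σ => iSup_le fun hσ => iSup_le fun hb => ?_
  refine le_trans
    (RM.lp_le_l2 (fun j : Fin J => (‖a (σ j.succ) - a (σ j.castSucc)‖₊ : ℝ≥0∞)) hρ) ?_
  rw [sqrt2]
  simp only [← RM.rpow_two_eq]
  have hstU : ∀ k : Fin J, σ k.castSucc ≤ σ k.succ := fun k => (hσ (Fin.castSucc_lt_succ : k.castSucc < k.succ)).le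
  have key : ∀ k : Fin J, (‖a (σ k.succ) - a (σ k.castSucc)‖₊ : ℝ≥0∞) ≤
      ∑ i ∈ Finset.range (m+1),
        ((‖RM.Ui a (σ k.castSucc) (σ k.succ) i‖₊ : ℝ≥0∞)
          + (‖RM.Vi a (σ k.castSucc) (σ k.succ) i‖₊ : ℝ≥0∞)) := by
    intro k
    rw [← RM.telescope a (σ k.castSucc) (σ k.succ) m (hstU k) (hb k.succ).2]
    calc (‖∑ l ∈ Finset.range (m+1),
            (RM.Ui a (σ k.castSucc) (σ k.succ) l + RM.Vi a (σ k.castSucc) (σ k.succ) l)‖₊ : ℝ≥0∞)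
        ≤ ∑ l ∈ Finset.range (m+1),
            (‖RM.Ui a (σ k.castSucc) (σ k.succ) l
              + RM.Vi a (σ k.castSucc) (σ k.succ) l‖₊ : ℝ≥0∞) := by
          rw [← ENNReal.coe_finset_sum]
          exact ENNReal.coe_le_coe.2 (nnnorm_sum_le _ _)
      _ ≤ _ := Finset.sum_le_sum fun l _ => by
          rw [← ENNReal.coe_add]
          exact ENNReal.coe_le_coe.2 (nnnorm_add_le _ _)
  calc (∑ k : Fin J, (‖a (σ k.succ) - a (σ k.castSucc)‖₊ : ℝ≥0∞) ^ (2:ℝ)) ^ ((1:ℝ)/2)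
      ≤ (∑ k : Fin J, (∑ i ∈ Finset.range (m+1),
          ((‖RM.Ui a (σ k.castSucc) (σ k.succ) i‖₊ : ℝ≥0∞)
            + (‖RM.Vi a (σ k.castSucc) (σ k.succ) i‖₊ : ℝ≥0∞))) ^ (2:ℝ)) ^ ((1:ℝ)/2) :=
        ENNReal.rpow_le_rpow (Finset.sum_le_sum fun k _ =>
          ENNReal.rpow_le_rpow (key k) (by norm_num)) (by norm_num)
    _ ≤ ∑ i ∈ Finset.range (m+1), (∑ k : Fin J,
          ((‖RM.Ui a (σ k.castSucc) (σ k.succ) i‖₊ : ℝ≥0∞)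
            + (‖RM.Vi a (σ k.castSucc) (σ k.succ) i‖₊ : ℝ≥0∞)) ^ (2:ℝ)) ^ ((1:ℝ)/2) :=
        RM.minkowski_sum _ _
    _ ≤ ∑ i ∈ Finset.range (m+1),
          (2 * ∑ j ∈ (Finset.range (2^(m-i))).filter (fun j => j₀ ≤ j * 2^i),
            (‖a ((j+1) * 2^i) - a (j * 2^i)‖₊ : ℝ≥0∞) ^ (2:ℝ)) ^ ((1:ℝ)/2) :=
        Finset.sum_le_sum fun i hi => ENNReal.rpow_le_rpow
          (RM.per_scale a j₀ σ hσ hb (by have := Finset.mem_range.1 hi; omega)) (by norm_num)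
    _ = ∑ i ∈ Finset.range (m+1), (2:ℝ≥0∞) ^ ((1:ℝ)/2)
          * (∑ j ∈ (Finset.range (2^(m-i))).filter (fun j => j₀ ≤ j * 2^i),
            (‖a ((j+1) * 2^i) - a (j * 2^i)‖₊ : ℝ≥0∞) ^ (2:ℝ)) ^ ((1:ℝ)/2) :=
        Finset.sum_congr rfl fun i _ => ENNReal.mul_rpow_of_nonneg _ _ (by norm_num)
    _ = _ := (Finset.mul_sum _ _ _).symm
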